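/- Let n ≥ 3 be an odd natural number. Define ϖ₁(x₁,…,x_n) = (Π_{j=2}^{n} x_j) · Π_{2 ≤ i < j ≤ n} (x_i² − x_j²), and for 1 ≤ k ≤ n define ϖ_k by the cyclic shift ϖ_k(x₁,…,x_n) = ϖ₁(x_k, x_{k+1}, …, x_n, x₁, …, x_{k−1}). Then: (i) the vector field 𝐎_n = (ϖ₁,…,ϖ_n) is solenoidal, i.e. Σ_{k=1}^{n} (∂ϖ_k/∂x_k)(x) = 0 for all x ∈ ℝⁿ; and (ii) for every integer s with 1 ≤ s ≤ n−1, the form Σ_{j=1}^{n} x_j^{2s} is a first integral of 𝐎_n, i.e. Σ_{k=1}^{n} x_k^{2s−1} · ϖ_k(x) = 0 for all x ∈ ℝⁿ. -/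

import Mathlib

open scoped BigOperators
open Finset
open Fin.NatCast

-- reindex filter ≠ 0 as map of succ
lemma aux_filter_ne_zero (m : ℕ) :
    (Finset.univ.filter (fun j : Fin (m+1) => j ≠ 0)) =
      Finset.univ.map ⟨Fin.succ, Fin.succ_injective m⟩ := by
  ext j
  simp only [mem_filter, mem_univ, true_and, mem_map, Function.Embedding.coeFn_mk]
  exact Fin.exists_succ_eq.symm

lemma aux_filter_pairs (m : ℕ) :
    (Finset.univ.filter (fun p : Fin (m+1) × Fin (m+1) => p.1 ≠ 0 ∧ p.2 ≠ 0 ∧ p.1 < p.2)) =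
      (Finset.univ.filter (fun p : Fin m × Fin m => p.1 < p.2)).map
        ⟨Prod.map Fin.succ Fin.succ,
          (Fin.succ_injective m).prodMap (Fin.succ_injective m)⟩ := by
  ext ⟨a, b⟩
  simp only [mem_filter, mem_univ, true_and, mem_map, Function.Embedding.coeFn_mk]
  constructor
  · rintro ⟨ha, hb, hab⟩
    obtain ⟨a', rfl⟩ := Fin.exists_succ_eq.2 ha
    obtain ⟨b', rfl⟩ := Fin.exists_succ_eq.2 hb
    exact ⟨(a', b'), by simpa using hab, rfl⟩
  · rintro ⟨⟨a', b'⟩, h, h2⟩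
    obtain ⟨rfl, rfl⟩ := Prod.mk.injEq .. ▸ h2
    simp only [Prod.map] at *
    exact ⟨Fin.succ_ne_zero _, Fin.succ_ne_zero _, by simpa using h⟩

lemma aux_prod_pairs {M : Type*} [Fintype M] [LinearOrder M] [LocallyFiniteOrderTop M] (f : M → M → ℝ) :
    ∏ p ∈ Finset.univ.filter (fun p : M × M => p.1 < p.2), f p.1 p.2 =
      ∏ i, ∏ j ∈ Finset.Ioi i, f i j := by
  rw [Finset.prod_sigma' Finset.univ (fun i => Finset.Ioi i) (fun i j => f i j)]
  apply Finset.prod_nbij' (fun p => ⟨p.1, p.2⟩) (fun p => (p.1, p.2)) <;> simp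

lemma aux_prod_eq_det (m : ℕ) (y : Fin (m+1) → ℝ) :
    (∏ j ∈ Finset.univ.filter (fun j : Fin (m+1) => j ≠ 0), y j) *
      ∏ p ∈ Finset.univ.filter
          (fun p : Fin (m+1) × Fin (m+1) => p.1 ≠ 0 ∧ p.2 ≠ 0 ∧ p.1 < p.2),
        (y p.1 ^ 2 - y p.2 ^ 2)
    = (∏ i : Fin m, ∏ j ∈ Finset.Ioi i, (-1:ℝ)) *
      Matrix.det (Matrix.of fun i j : Fin m => y j.succ ^ (2 * (i:ℕ) + 1)) := by
  set v : Fin m → ℝ := fun j => y j.succ ^ 2 with hv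
  have h1 : (∏ j ∈ Finset.univ.filter (fun j : Fin (m+1) => j ≠ 0), y j)
      = ∏ j : Fin m, y j.succ := by
    rw [aux_filter_ne_zero, Finset.prod_map]; rfl
  have h2 : (∏ p ∈ Finset.univ.filter
          (fun p : Fin (m+1) × Fin (m+1) => p.1 ≠ 0 ∧ p.2 ≠ 0 ∧ p.1 < p.2),
        (y p.1 ^ 2 - y p.2 ^ 2))
      = ∏ i : Fin m, ∏ j ∈ Finset.Ioi i, ((-1 : ℝ) * (v j - v i)) := by
    rw [aux_filter_pairs, Finset.prod_map]
    simp only [Function.Embedding.coeFn_mk, Prod.map_fst, Prod.map_snd]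
    rw [aux_prod_pairs (fun i j : Fin m => y i.succ ^ 2 - y j.succ ^ 2)]
    refine Finset.prod_congr rfl fun i _ => Finset.prod_congr rfl fun j _ => by ring
  have h3 : Matrix.det (Matrix.of fun i j : Fin m => y j.succ ^ (2 * (i:ℕ) + 1))
      = (∏ j : Fin m, y j.succ) * ∏ i : Fin m, ∏ j ∈ Finset.Ioi i, (v j - v i) := by
    have : (Matrix.of fun i j : Fin m => y j.succ ^ (2 * (i:ℕ) + 1))
        = Matrix.of fun i j : Fin m => (y j.succ) * ((Matrix.vandermonde v).transpose i j) := by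
      ext i j
      simp only [Matrix.of_apply, Matrix.transpose_apply, Matrix.vandermonde_apply, hv]
      ring
    rw [this, Matrix.det_mul_row, Matrix.det_transpose, Matrix.det_vandermonde]
  rw [h1, h2, h3]
  simp only [Finset.prod_mul_distrib]
  ring

lemma aux_mod2 (a b : ℕ) (hb : 0 < b) (h : a < 2 * b) :
    a % b = if a < b then a else a - b := by
  split_ifs with h'
  · exact Nat.mod_eq_of_lt h'
  · rw [Nat.mod_eq_sub_mod (le_of_not_gt h'), Nat.mod_eq_of_lt (by omega)]

lemma aux_rot_pow (M t : ℕ) (j : Fin (M+1)) :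
    ((finRotate (M+1)) ^ t) j = j + (t : Fin (M+1)) := by
  induction t with
  | zero => simp
  | succ t ih =>
      rw [pow_succ', Equiv.Perm.mul_apply, ih, finRotate_succ_apply]
      rw [Nat.cast_add, Nat.cast_one, add_assoc]

lemma aux_succAbove (m : ℕ) (k : Fin (m+2)) (j : Fin (m+1)) :
    k.succAbove (j + (((k:ℕ) % (m+1) : ℕ) : Fin (m+1))) = j.succ + k := by
  set K := (k : ℕ) with hK
  set J := (j : ℕ) with hJ
  have hKlt : K < m + 2 := k.isLt
  have hJlt : J < m + 1 := j.isLt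
  have ht : K % (m+1) < m + 1 := Nat.mod_lt _ (by omega)
  have hval : (((K % (m+1) : ℕ) : Fin (m+1)) : ℕ) = K % (m+1) :=
    Fin.val_cast_of_lt ht
  have hadd : ((j + ((K % (m+1) : ℕ) : Fin (m+1))) : Fin (m+1)).val
      = (J + K % (m+1)) % (m+1) := by
    rw [Fin.val_add, hval]
  have hmods : K % (m+1) = if K < m+1 then K else K - (m+1) :=
    aux_mod2 _ _ (by omega) (by omega)
  have hmods2 : (J + K % (m+1)) % (m+1)
      = if J + K % (m+1) < m+1 then J + K % (m+1) else J + K % (m+1) - (m+1) :=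
    aux_mod2 _ _ (by omega) (by omega)
  have hmods3 : (J + 1 + K) % (m+2)
      = if J + 1 + K < m+2 then J + 1 + K else J + 1 + K - (m+2) :=
    aux_mod2 _ _ (by omega) (by omega)
  by_cases hc : (J + K % (m+1)) % (m+1) < K
  · rw [Fin.succAbove_of_castSucc_lt _ _ (by
      rw [Fin.lt_def, Fin.coe_castSucc, hadd]; exact hc)]
    apply Fin.ext
    rw [Fin.coe_castSucc, hadd, Fin.val_add, Fin.val_succ]
    rw [hmods3]
    rw [hmods2] at hc ⊢
    rw [hmods] at hc ⊢
    split_ifs at hc ⊢ <;> omega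
  · rw [Fin.succAbove_of_le_castSucc _ _ (by
      rw [Fin.le_def, Fin.coe_castSucc, hadd]; exact le_of_not_gt hc)]
    apply Fin.ext
    rw [Fin.val_succ, hadd, Fin.val_add, Fin.val_succ]
    rw [hmods3]
    rw [hmods2] at hc ⊢
    rw [hmods] at hc ⊢
    split_ifs at hc ⊢ <;> omega

lemma aux_sign (m : ℕ) (hm : Odd m) (k : Fin (m+2)) :
    ((Equiv.Perm.sign ((finRotate (m+1)) ^ ((k:ℕ) % (m+1)))) : ℝ) = (-1) ^ (k:ℕ) := by
  rw [map_pow, sign_finRotate]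
  obtain ⟨c, rfl⟩ := hm
  by_cases hk : (k : ℕ) = 2*c + 2
  · rw [hk]
    norm_num
    rw [show 2*c+2 = 2*(c+1) by ring, pow_mul]
    norm_num
  · have h1 : (k:ℕ) % (2*c+1+1) = (k:ℕ) := Nat.mod_eq_of_lt (by
      have := k.isLt; omega)
    rw [h1]
    push_cast
    rw [← pow_mul]
    have : (2*c+1) * (k:ℕ) = 2 * (c * (k:ℕ)) + (k:ℕ) := by ring
    rw [this, pow_add, pow_mul]
    norm_num

lemma aux_det_rot (m : ℕ) (hm : Odd m) (k : Fin (m+2)) (x : Fin (m+2) → ℝ) :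
    Matrix.det (Matrix.of fun i j : Fin (m+1) => x (j.succ + k) ^ (2 * (i:ℕ) + 1))
      = (-1:ℝ) ^ (k:ℕ) *
        Matrix.det (Matrix.of fun i j : Fin (m+1) => x (k.succAbove j) ^ (2 * (i:ℕ) + 1)) := by
  set π : Equiv.Perm (Fin (m+1)) := (finRotate (m+1)) ^ ((k:ℕ) % (m+1)) with hπ
  have key : (Matrix.of fun i j : Fin (m+1) => x (j.succ + k) ^ (2 * (i:ℕ) + 1))
      = (Matrix.of fun i j : Fin (m+1) => x (k.succAbove j) ^ (2 * (i:ℕ) + 1)).submatrix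
          id π := by
    ext i j
    simp only [Matrix.of_apply, Matrix.submatrix_apply, id_eq, hπ]
    rw [aux_rot_pow, aux_succAbove]
  rw [key, Matrix.det_permute', ← aux_sign m hm k]


/-- the hyperoctahedral vector field `𝐎ₙ` (odd `n ≥ 3`), whose
`k`-th coordinate is the cyclic shift
`ϖ_k(x) = (∏_{j≠k} x_{j+k})·∏_{0<i<j<n}(x_{i+k}² − x_{j+k}²)` (0-based indices,
`k = 0` giving `ϖ₁`), is solenoidal, and each form `Σⱼ x_j^{2s}`,
`1 ≤ s ≤ n−1`, is a first integral of `𝐎ₙ`. -/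
theorem stmt_15 (n : ℕ) (hn : 3 ≤ n) (hodd : Odd n)
    (ϖ : Fin n → (Fin n → ℝ) → ℝ)
    (hϖ : ∀ (k : Fin n) (x : Fin n → ℝ),
      ϖ k x =
        (∏ j ∈ Finset.univ.filter (fun j : Fin n => j ≠ ⟨0, by omega⟩), x (j + k)) *
        ∏ p ∈ Finset.univ.filter
          (fun p : Fin n × Fin n =>
            p.1 ≠ ⟨0, by omega⟩ ∧ p.2 ≠ ⟨0, by omega⟩ ∧ p.1 < p.2),
          ((x (p.1 + k)) ^ 2 - (x (p.2 + k)) ^ 2)) :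
    (∀ x : Fin n → ℝ, ∑ k, fderiv ℝ (ϖ k) x (Pi.single k 1) = 0) ∧
    (∀ s : ℕ, 1 ≤ s → s ≤ n - 1 →
      ∀ x : Fin n → ℝ, ∑ k, x k ^ (2 * s - 1) * ϖ k x = 0) := by
  obtain ⟨m, rfl⟩ : ∃ m, n = m + 2 := ⟨n - 2, by omega⟩
  have hm : Odd m := by
    rcases hodd with ⟨c, hc⟩; exact ⟨c - 1, by omega⟩
  have h0 : (⟨0, by omega⟩ : Fin (m+2)) = 0 := Fin.ext (by simp)
  simp only [h0] at hϖ
  -- the key closed formula for ϖ k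
  set c : ℝ := ∏ i : Fin (m+1), ∏ j ∈ Finset.Ioi i, (-1:ℝ) with hc
  have hkey : ∀ (k : Fin (m+2)) (x : Fin (m+2) → ℝ),
      ϖ k x = c * ((-1:ℝ) ^ (k:ℕ) *
        Matrix.det (Matrix.of fun i j : Fin (m+1) =>
          x (k.succAbove j) ^ (2 * (i:ℕ) + 1))) := by
    intro k x
    have h1 := aux_prod_eq_det (m+1) (fun j => x (j + k))
    beta_reduce at h1
    rw [hϖ k x, h1, aux_det_rot m hm k x]
  constructor
  · -- solenoidality
    intro x
    apply Finset.sum_eq_zero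
    intro k _
    have hϖfun : ϖ k = fun y : Fin (m+2) → ℝ =>
        (∏ j ∈ Finset.univ.filter (fun j : Fin (m+2) => j ≠ 0), y (j + k)) *
        ∏ p ∈ Finset.univ.filter
          (fun p : Fin (m+2) × Fin (m+2) => p.1 ≠ 0 ∧ p.2 ≠ 0 ∧ p.1 < p.2),
          ((y (p.1 + k)) ^ 2 - (y (p.2 + k)) ^ 2) := funext (hϖ k)
    have hdiff : DifferentiableAt ℝ (ϖ k) x := by
      rw [hϖfun]
      have hprojd : ∀ i : Fin (m+2), DifferentiableAt ℝ (fun y : Fin (m+2) → ℝ => y i) x :=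
        fun i => differentiableAt_apply (𝕜 := ℝ) (F' := fun _ : Fin (m+2) => ℝ) i x
      have hd1 : DifferentiableAt ℝ (fun y : Fin (m+2) → ℝ =>
          ∏ j ∈ Finset.univ.filter (fun j : Fin (m+2) => j ≠ 0), y (j + k)) x :=
        (HasFDerivAt.finset_prod (fun j _ => (hprojd (j + k)).hasFDerivAt)).differentiableAt
      have hd2 : DifferentiableAt ℝ (fun y : Fin (m+2) → ℝ =>
          ∏ p ∈ Finset.univ.filter
            (fun p : Fin (m+2) × Fin (m+2) => p.1 ≠ 0 ∧ p.2 ≠ 0 ∧ p.1 < p.2),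
            ((y (p.1 + k)) ^ 2 - (y (p.2 + k)) ^ 2)) x :=
        (HasFDerivAt.finset_prod (fun p _ =>
          (((hprojd (p.1 + k)).pow 2).sub ((hprojd (p.2 + k)).pow 2)).hasFDerivAt)).differentiableAt
      exact hd1.mul hd2
    rw [← hdiff.lineDeriv_eq_fderiv]
    have hpt : ∀ (j : Fin (m+2)) (t : ℝ), j ≠ 0 →
        (x + t • (Pi.single k 1 : Fin (m+2) → ℝ)) (j + k) = x (j + k) := by
      intro j t hj
      have hne : j + k ≠ k := by
        intro h
        exact hj (add_right_cancel (h.trans (zero_add k).symm))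
      simp [Pi.single_eq_of_ne hne]
    have hconst : (fun t : ℝ => ϖ k (x + t • (Pi.single k 1 : Fin (m+2) → ℝ))) = fun _ => ϖ k x := by
      funext t
      rw [hϖ k, hϖ k]
      congr 1
      · refine Finset.prod_congr rfl fun j hj => ?_
        exact hpt j t (by simpa using hj)
      · refine Finset.prod_congr rfl fun p hp => ?_
        simp only [Finset.mem_filter] at hp
        rw [hpt p.1 t hp.2.1, hpt p.2 t hp.2.2.1]
    rw [lineDeriv, hconst, deriv_const]
  · -- first integrals
    intro s hs1 hs2 x
    set B : Matrix (Fin (m+2)) (Fin (m+2)) ℝ :=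
      Matrix.of (fun i j => x j ^ (2 * (if i = 0 then s else (i:ℕ)) - 1)) with hB
    have hB0 : ∀ j, B 0 j = x j ^ (2 * s - 1) := by intro j; simp [hB]
    have hBs : ∀ (i : Fin (m+1)) (j), B i.succ j = x j ^ (2 * (i:ℕ) + 1) := by
      intro i j
      have h1 : (i.succ : Fin (m+2)) ≠ 0 := Fin.succ_ne_zero i
      simp only [hB, Matrix.of_apply, if_neg h1, Fin.val_succ]
      congr 1
    have hminor : ∀ k : Fin (m+2),
        (Matrix.of fun i j : Fin (m+1) => x (k.succAbove j) ^ (2 * (i:ℕ) + 1)) =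
          B.submatrix Fin.succ k.succAbove := by
      intro k
      ext i j
      rw [Matrix.submatrix_apply, hBs]
      rfl
    have hdet0 : B.det = 0 := by
      have hs' : s < m + 2 := by omega
      apply Matrix.det_zero_of_row_eq (i := (0 : Fin (m+2))) (j := ⟨s, hs'⟩)
      · intro h
        have : (0 : ℕ) = s := congrArg Fin.val h
        omega
      · funext j
        have h1 : ((⟨s, hs'⟩ : Fin (m+2)) = 0) = False := by
          simp only [eq_iff_iff, iff_false]
          intro h
          have : s = (0:ℕ) := congrArg Fin.val h
          omega
        simp [hB, h1]
    calc ∑ k, x k ^ (2 * s - 1) * ϖ k x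
        = c * ∑ k : Fin (m+2), (-1:ℝ) ^ (k:ℕ) * B 0 k *
            Matrix.det (B.submatrix Fin.succ k.succAbove) := by
          rw [Finset.mul_sum]
          refine Finset.sum_congr rfl fun k _ => ?_
          rw [hkey k x, ← hminor k, hB0]
          ring
      _ = c * B.det := by rw [← Matrix.det_succ_row_zero]
      _ = 0 := by rw [hdet0, mul_zero]
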